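/- arXiv:2508.04067 — 2 statements merged into one kernel-verified Lean document; each statement's English description precedes it below -/
import Mathlib

section
/- Let g : [0,∞) → ℝ be positive and satisfy (1+s)g'(s) ≥ g(s). Let ρ > 0, set Φ(ρ) = cosh ρ − 1, φ(ρ) = sinh ρ, φ'(ρ) = cosh ρ. Then for all integers n ≥ 1 and 0 ≤ k ≤ n, the quantity [ ((n−k)(k+1))/(2n) · φ(ρ)^{n−k−2} φ'(ρ)^k + (k(k−1))/(2n) · φ(ρ)^{n−k} φ'(ρ)^{k−2} ] · g(Φ(ρ)) + (k/n) · φ(ρ)^{n−k} φ'(ρ)^{k−1} · g'(Φ(ρ)) is bounded below by [ ((n−k)(k+1))/(2n) · φ(ρ)^{n−k−2} φ'(ρ)^k + ((k+1)k)/(2n) · φ(ρ)^{n−k} φ'(ρ)^{k−2} ] · g(Φ(ρ)), which is strictly positive. -/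
/-- Positivity of the `|∇u|²` coefficient in the proof of the weighted volume
inequality in `ℍ^{n+1}`: with `φ = sinh ρ`, `φ' = cosh ρ`, `Φ = cosh ρ - 1`,
and `g` positive with `(1+s)g'(s) ≥ g(s)`, the coefficient is bounded below by
a strictly positive quantity. -/
theorem stmt6 (g : ℝ → ℝ) (hpos : ∀ s : ℝ, 0 ≤ s → 0 < g s)
    (hineq : ∀ s : ℝ, 0 ≤ s → g s ≤ (1 + s) * deriv g s)
    (ρ : ℝ) (hρ : 0 < ρ) (n k : ℕ) (hn : 1 ≤ n) (hk : k ≤ n) :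
    ((((n : ℝ) - k) * (k + 1)) / (2 * n) * Real.sinh ρ ^ ((n : ℤ) - k - 2) * Real.cosh ρ ^ (k : ℤ)
        + ((k : ℝ) * (k - 1)) / (2 * n) * Real.sinh ρ ^ ((n : ℤ) - k) * Real.cosh ρ ^ ((k : ℤ) - 2))
        * g (Real.cosh ρ - 1)
      + (k : ℝ) / n * Real.sinh ρ ^ ((n : ℤ) - k) * Real.cosh ρ ^ ((k : ℤ) - 1)
        * deriv g (Real.cosh ρ - 1)
    ≥ ((((n : ℝ) - k) * (k + 1)) / (2 * n) * Real.sinh ρ ^ ((n : ℤ) - k - 2) * Real.cosh ρ ^ (k : ℤ)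
        + (((k : ℝ) + 1) * k) / (2 * n) * Real.sinh ρ ^ ((n : ℤ) - k) * Real.cosh ρ ^ ((k : ℤ) - 2))
        * g (Real.cosh ρ - 1)
    ∧ 0 < ((((n : ℝ) - k) * (k + 1)) / (2 * n) * Real.sinh ρ ^ ((n : ℤ) - k - 2)
          * Real.cosh ρ ^ (k : ℤ)
        + (((k : ℝ) + 1) * k) / (2 * n) * Real.sinh ρ ^ ((n : ℤ) - k) * Real.cosh ρ ^ ((k : ℤ) - 2))
        * g (Real.cosh ρ - 1) := by
  have hs : (0 : ℝ) < Real.sinh ρ := Real.sinh_pos_iff.2 hρ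
  have hc : (0 : ℝ) < Real.cosh ρ := Real.cosh_pos ρ
  have hΦ : (0 : ℝ) ≤ Real.cosh ρ - 1 := by linarith [Real.one_le_cosh ρ]
  set s := Real.sinh ρ
  set c := Real.cosh ρ
  have hg : 0 < g (c - 1) := hpos _ hΦ
  have hg' : g (c - 1) ≤ c * deriv g (c - 1) := by
    have := hineq _ hΦ
    have h1 : (1 : ℝ) + (c - 1) = c := by ring
    rwa [h1] at this
  -- rewrite the zpow products
  have e1 : s ^ ((n : ℤ) - k) = s ^ ((n : ℤ) - k - 2) * s ^ 2 := by
    rw [← zpow_natCast s 2, ← zpow_add₀ hs.ne']; norm_num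
  have e2 : c ^ (k : ℤ) = c ^ ((k : ℤ) - 2) * c ^ 2 := by
    rw [← zpow_natCast c 2, ← zpow_add₀ hc.ne']; norm_num
  have e3 : c ^ ((k : ℤ) - 1) = c ^ ((k : ℤ) - 2) * c ^ (1 : ℤ) := by
    rw [← zpow_add₀ hc.ne']
    congr 1
    ring
  rw [e1, e2, e3]
  set X := s ^ ((n : ℤ) - k - 2) with hX
  set Y := c ^ ((k : ℤ) - 2) with hY
  have hXpos : 0 < X := zpow_pos hs _
  have hYpos : 0 < Y := zpow_pos hc _
  have hkn : (k : ℝ) ≤ n := by exact_mod_cast hk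
  have hn1 : (1 : ℝ) ≤ n := by exact_mod_cast hn
  have hk0 : (0 : ℝ) ≤ k := Nat.cast_nonneg k
  have hn0 : (0 : ℝ) < n := by linarith
  constructor
  · have key : 0 ≤ (k : ℝ) / n * (X * Y * s ^ 2) * (c * deriv g (c - 1) - g (c - 1)) := by
      apply mul_nonneg
      · positivity
      · linarith
    rw [ge_iff_le, ← sub_nonneg]
    have hrw : ((((n : ℝ) - k) * (k + 1)) / (2 * n) * X * (Y * c ^ 2)
          + ((k : ℝ) * (k - 1)) / (2 * n) * (X * s ^ 2) * Y) * g (c - 1)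
        + (k : ℝ) / n * (X * s ^ 2) * (Y * c ^ (1 : ℤ)) * deriv g (c - 1)
        - ((((n : ℝ) - k) * (k + 1)) / (2 * n) * X * (Y * c ^ 2)
          + (((k : ℝ) + 1) * k) / (2 * n) * (X * s ^ 2) * Y) * g (c - 1)
        = (k : ℝ) / n * (X * Y * s ^ 2) * (c * deriv g (c - 1) - g (c - 1)) := by
      field_simp
      ring
    rw [hrw]
    exact key
  · have hP : 0 < ((n : ℝ) - k) * (k + 1) * c ^ 2 + ((k : ℝ) + 1) * k * s ^ 2 := by
      rcases eq_or_lt_of_le hkn with h | h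
      · have hk1 : (1 : ℝ) ≤ k := by rw [h]; exact hn1
        have h0 : (n : ℝ) - k = 0 := by linarith
        have hs2 : 0 < s ^ 2 := pow_pos hs 2
        rw [h0]
        have : 0 < ((k : ℝ) + 1) * k * s ^ 2 :=
          mul_pos (mul_pos (by linarith) (by linarith)) hs2
        linarith
      · have h1 : 0 < ((n : ℝ) - k) * (k + 1) * c ^ 2 :=
          mul_pos (mul_pos (by linarith) (by linarith)) (pow_pos hc 2)
        have h2 : 0 ≤ ((k : ℝ) + 1) * k * s ^ 2 :=
          mul_nonneg (mul_nonneg (by linarith) hk0) (sq_nonneg s)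
        linarith
    have := mul_pos (mul_pos (mul_pos hXpos hYpos) hg) hP
    have h2n : 0 < 2 * (n : ℝ) := by linarith
    rw [show ((((n : ℝ) - k) * (k + 1)) / (2 * n) * X * (Y * c ^ 2)
        + (((k : ℝ) + 1) * k) / (2 * n) * (X * s ^ 2) * Y) * g (c - 1)
        = X * Y * g (c - 1) * (((n : ℝ) - k) * (k + 1) * c ^ 2 + ((k : ℝ) + 1) * k * s ^ 2)
          / (2 * n) by field_simp]
    positivity
end

section
/- Let g : [0,∞) → ℝ be positive and satisfy (1+s)g'(s) ≥ g(s). Let ρ > 0, φ(ρ) = sinh ρ, φ'(ρ) = cosh ρ = 1 + Φ(ρ) with Φ(ρ) = cosh ρ − 1. Then for integers n ≥ 1, 0 ≤ k ≤ n−1, −1 ≤ j < k, the quantity [ ((n−k)(k−j))/(2n) · φ^{n−k−2} φ'^{k} + (k(k−j−2))/(2n) · φ^{n−k} φ'^{k−2} ] · g(Φ(ρ)) + ((2k−j−1)/(2n)) · φ^{n−k} φ'^{k−1} · g'(Φ(ρ)) is at least [ ((n−k)(k−j))/(2n) · φ^{n−k−2} φ'^{k} + ((k+1)(k−j−1))/(2n)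 · φ^{n−k} φ'^{k−2} ] · g(Φ(ρ)) > 0, where φ = φ(ρ), φ' = φ'(ρ). -/
/-- Coefficient positivity used in the quermassintegral stability estimate in
`ℍ^{n+1}`: with `φ = sinh ρ`, `φ' = cosh ρ`, `Φ = cosh ρ - 1`, `g` positive with
`(1+s)g'(s) ≥ g(s)`, integers `n ≥ 1`, `0 ≤ k ≤ n-1`, `-1 ≤ j < k`. -/
theorem stmt7 (g : ℝ → ℝ) (hpos : ∀ s : ℝ, 0 ≤ s → 0 < g s)
    (hineq : ∀ s : ℝ, 0 ≤ s → g s ≤ (1 + s) * deriv g s)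
    (ρ : ℝ) (hρ : 0 < ρ) (n k : ℕ) (j : ℤ) (hn : 1 ≤ n) (hk : k ≤ n - 1)
    (hj : -1 ≤ j) (hjk : j < (k : ℤ)) :
    ((((n : ℝ) - k) * ((k : ℝ) - j)) / (2 * n) * Real.sinh ρ ^ ((n : ℤ) - k - 2)
          * Real.cosh ρ ^ (k : ℤ)
        + ((k : ℝ) * ((k : ℝ) - j - 2)) / (2 * n) * Real.sinh ρ ^ ((n : ℤ) - k)
          * Real.cosh ρ ^ ((k : ℤ) - 2)) * g (Real.cosh ρ - 1)
      + (2 * (k : ℝ) - j - 1) / (2 * n) * Real.sinh ρ ^ ((n : ℤ) - k)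
          * Real.cosh ρ ^ ((k : ℤ) - 1) * deriv g (Real.cosh ρ - 1)
    ≥ ((((n : ℝ) - k) * ((k : ℝ) - j)) / (2 * n) * Real.sinh ρ ^ ((n : ℤ) - k - 2)
          * Real.cosh ρ ^ (k : ℤ)
        + (((k : ℝ) + 1) * ((k : ℝ) - j - 1)) / (2 * n) * Real.sinh ρ ^ ((n : ℤ) - k)
          * Real.cosh ρ ^ ((k : ℤ) - 2)) * g (Real.cosh ρ - 1)
    ∧ 0 < ((((n : ℝ) - k) * ((k : ℝ) - j)) / (2 * n) * Real.sinh ρ ^ ((n : ℤ) - k - 2)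
          * Real.cosh ρ ^ (k : ℤ)
        + (((k : ℝ) + 1) * ((k : ℝ) - j - 1)) / (2 * n) * Real.sinh ρ ^ ((n : ℤ) - k)
          * Real.cosh ρ ^ ((k : ℤ) - 2)) * g (Real.cosh ρ - 1) := by

  have hs0 : 0 < Real.sinh ρ := Real.sinh_pos_iff.mpr hρ
  have hc0 : 0 < Real.cosh ρ := Real.cosh_pos ρ
  have hc1 : 1 ≤ Real.cosh ρ := Real.one_le_cosh ρ
  have hΦ : 0 ≤ Real.cosh ρ - 1 := by linarith
  have hA : 0 < g (Real.cosh ρ - 1) := hpos _ hΦ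
  have hAB : g (Real.cosh ρ - 1) ≤ Real.cosh ρ * deriv g (Real.cosh ρ - 1) := by
    have h := hineq _ hΦ
    have h2 : (1 + (Real.cosh ρ - 1)) = Real.cosh ρ := by ring
    rwa [h2] at h
  have hknN : k < n := by omega
  have hkn : (k : ℝ) < n := by exact_mod_cast hknN
  have hn0 : (0 : ℝ) < n := by exact_mod_cast hn
  have hjkR : (j : ℝ) < (k : ℝ) := by exact_mod_cast hjk
  have hjk1 : (j : ℝ) ≤ (k : ℝ) - 1 := by
    have : j ≤ (k : ℤ) - 1 := by omega
    have : (j:ℝ) ≤ ((k:ℤ):ℝ) - 1 := by exact_mod_cast this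
    push_cast at this
    linarith
  have hk0 : (0 : ℝ) ≤ (k : ℝ) := Nat.cast_nonneg k
  have hP1 : 0 < Real.sinh ρ ^ ((n : ℤ) - k - 2) := zpow_pos hs0 _
  have hP2 : 0 < Real.sinh ρ ^ ((n : ℤ) - k) := zpow_pos hs0 _
  have hQk : 0 < Real.cosh ρ ^ (k : ℤ) := zpow_pos hc0 _
  have hQ2 : 0 < Real.cosh ρ ^ ((k : ℤ) - 2) := zpow_pos hc0 _
  have hCrel : Real.cosh ρ ^ ((k : ℤ) - 1)
      = Real.cosh ρ ^ ((k : ℤ) - 2) * Real.cosh ρ := by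
    rw [← zpow_add_one₀ (ne_of_gt hc0)]
    ring_nf
  have ht1 : 0 < (((n : ℝ) - k) * ((k : ℝ) - j)) / (2 * n)
      * Real.sinh ρ ^ ((n : ℤ) - k - 2) * Real.cosh ρ ^ (k : ℤ) := by
    apply mul_pos (mul_pos _ hP1) hQk
    apply div_pos (mul_pos (by linarith) (by linarith)) (by linarith)
  have ht2 : 0 ≤ (((k : ℝ) + 1) * ((k : ℝ) - j - 1)) / (2 * n)
      * Real.sinh ρ ^ ((n : ℤ) - k) * Real.cosh ρ ^ ((k : ℤ) - 2) := by
    apply mul_nonneg (mul_nonneg _ hP2.le) hQ2.le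
    apply div_nonneg (mul_nonneg (by linarith) (by linarith)) (by linarith)
  have hb : 0 ≤ (2 * (k : ℝ) - j - 1) / (2 * n) :=
    div_nonneg (by linarith) (by linarith)
  have hd : 0 ≤ (2 * (k : ℝ) - j - 1) / (2 * n) * Real.sinh ρ ^ ((n : ℤ) - k)
      * Real.cosh ρ ^ ((k : ℤ) - 2)
      * (Real.cosh ρ * deriv g (Real.cosh ρ - 1) - g (Real.cosh ρ - 1)) :=
    mul_nonneg (mul_nonneg (mul_nonneg hb hP2.le) hQ2.le) (by linarith)
  constructor
  · have hid : ((((n : ℝ) - k) * ((k : ℝ) - j)) / (2 * n) * Real.sinh ρ ^ ((n : ℤ) - k - 2)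
          * Real.cosh ρ ^ (k : ℤ)
        + ((k : ℝ) * ((k : ℝ) - j - 2)) / (2 * n) * Real.sinh ρ ^ ((n : ℤ) - k)
          * Real.cosh ρ ^ ((k : ℤ) - 2)) * g (Real.cosh ρ - 1)
      + (2 * (k : ℝ) - j - 1) / (2 * n) * Real.sinh ρ ^ ((n : ℤ) - k)
          * Real.cosh ρ ^ ((k : ℤ) - 1) * deriv g (Real.cosh ρ - 1)
      = ((((n : ℝ) - k) * ((k : ℝ) - j)) / (2 * n) * Real.sinh ρ ^ ((n : ℤ) - k - 2)
          * Real.cosh ρ ^ (k : ℤ)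
        + (((k : ℝ) + 1) * ((k : ℝ) - j - 1)) / (2 * n) * Real.sinh ρ ^ ((n : ℤ) - k)
          * Real.cosh ρ ^ ((k : ℤ) - 2)) * g (Real.cosh ρ - 1)
      + (2 * (k : ℝ) - j - 1) / (2 * n) * Real.sinh ρ ^ ((n : ℤ) - k)
          * Real.cosh ρ ^ ((k : ℤ) - 2)
          * (Real.cosh ρ * deriv g (Real.cosh ρ - 1) - g (Real.cosh ρ - 1)) := by
      rw [hCrel]; ring
    rw [ge_iff_le, hid]
    linarith
  · exact mul_pos (by linarith) hA
end
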